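/- Let Λ ≠ ℕ be a numerical semigroup. (i) If ω(Λ) ≠ 1, then for every integer γ ≥ g(Λ) there exists a descendant of Λ of genus γ. (ii) If ω(Λ) = 1, then every descendant of Λ has genus at most g(shrink(Λ)), and Λ has exactly one descendant of genus g(shrink(Λ)). -/
import Mathlib


open Pointwise

namespace NumSgpPaper

/-- `S` is a numerical semigroup: an additive submonoid of ℕ with finite complement. -/
structure IsNumSgp (S : Set ℕ) : Prop where
  zero_mem : 0 ∈ S
  add_mem : ∀ ⦃a b : ℕ⦄, a ∈ S → b ∈ S → a + b ∈ S
  cofinite : Sᶜ.Finite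

/-- The Frobenius number: the largest gap of `S` (junk value `0` if there are no gaps). -/
noncomputable def frob (S : Set ℕ) : ℕ := sSup Sᶜ

open Classical in
/-- The conductor: one plus the largest gap, and `0` if there are no gaps (so `c(ℕ) = 0`). -/
noncomputable def conductor (S : Set ℕ) : ℕ := if Sᶜ = ∅ then 0 else frob S + 1

/-- The genus: the number of gaps. -/
noncomputable def genus (S : Set ℕ) : ℕ := Sᶜ.ncard

/-- The multiplicity: the smallest positive element. -/
noncomputable def mult (S : Set ℕ) : ℕ := sInf {n : ℕ | n ∈ S ∧ 0 < n}

/-- The jump: the difference between the second and first positive elements. -/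
noncomputable def jump (S : Set ℕ) : ℕ := sInf {n : ℕ | n ∈ S ∧ mult S < n} - mult S

/-- A minimal generator: a positive element of `S` that is not the sum of
two positive elements of `S`. -/
def IsMinGen (S : Set ℕ) (x : ℕ) : Prop :=
  0 < x ∧ x ∈ S ∧ ¬ ∃ a b : ℕ, 0 < a ∧ 0 < b ∧ a ∈ S ∧ b ∈ S ∧ a + b = x

/-- A right generator: a minimal generator larger than the Frobenius number. -/
def IsRightGen (S : Set ℕ) (x : ℕ) : Prop := IsMinGen S x ∧ frob S < x

/-- A strong generator: a right generator `σ` such that `σ + m(S)` is a minimal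
generator of `S \ {σ}`. -/
def IsStrongGen (S : Set ℕ) (σ : ℕ) : Prop :=
  IsRightGen S σ ∧ IsMinGen (S \ {σ}) (σ + mult S)

/-- `S` is ordinary when its gaps are exactly `{1, …, g(S)}`. -/
def IsOrdinary (S : Set ℕ) : Prop := Sᶜ = Set.Icc 1 (genus S)

/-- The left elements: the elements of `S` smaller than the Frobenius number. -/
def leftEls (S : Set ℕ) : Set ℕ := {x : ℕ | x ∈ S ∧ x < frob S}

/-- The gcd of a set of natural numbers. -/
noncomputable def setGcd (A : Set ℕ) : ℕ :=
  sInf {d : ℕ | (∀ a ∈ A, d ∣ a) ∧ ∀ e : ℕ, (∀ a ∈ A, e ∣ a) → e ∣ d}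

/-- `ω(S)`: the gcd of the left elements of `S`. -/
noncomputable def omega' (S : Set ℕ) : ℕ := setGcd (leftEls S)

/-- The shrinking of `S`: the additive submonoid of ℕ generated by the left
elements divided by their gcd. -/
noncomputable def shrink (S : Set ℕ) : Set ℕ :=
  (AddSubmonoid.closure ((fun x => x / omega' S) '' leftEls S) : AddSubmonoid ℕ)

/-- `T` is a descendant of `S`: a numerical semigroup contained in `S` all of whose
missing elements lie beyond the Frobenius number of `S`. -/
def IsDescendant (S T : Set ℕ) : Prop :=
  IsNumSgp T ∧ T ⊆ S ∧ ∀ x ∈ S \ T, frob S < x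

/-- The pseudo-ordinary semigroup `P_{m,u} = {0, m} ∪ {n : n ≥ m + u}`. -/
def P (m u : ℕ) : Set ℕ := {0, m} ∪ {n : ℕ | m + u ≤ n}

/-- The submonoid of ℕ generated by the interval `{a, …, b}`. -/
def intervalSgp (a b : ℕ) : Set ℕ := (AddSubmonoid.closure (Set.Icc a b) : AddSubmonoid ℕ)


/-- (i) If `ω(Λ) ≠ 1`, then `Λ ≠ ℕ` has descendants of every genus `γ ≥ g(Λ)`.
(ii) If `ω(Λ) = 1`, every descendant has genus at most `g(shrink(Λ))`, and there is
exactly one descendant of that genus. -/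
lemma ivtNat (f : ℕ → ℕ) (h0 : f 0 = 0) (hstep : ∀ k, f (k+1) ≤ f k + 1)
    (hub : ∀ m, ∃ k, m ≤ f k) : ∀ m, ∃ k, f k = m := by
  intro m
  have hne : {j | m ≤ f j}.Nonempty := hub m
  have hmem : sInf {j | m ≤ f j} ∈ {j | m ≤ f j} := Nat.sInf_mem hne
  set j := sInf {j | m ≤ f j} with hj
  rcases Nat.eq_zero_or_pos j with h | h
  · rw [h] at hmem
    simp only [Set.mem_setOf_eq, h0] at hmem
    exact ⟨0, by omega⟩
  · obtain ⟨i, hji⟩ := Nat.exists_eq_add_of_lt h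
    have hi : ¬ (m ≤ f i) := by
      intro hc
      have h2 : sInf {j | m ≤ f j} ≤ i := Nat.sInf_le hc
      rw [← hj] at h2
      omega
    refine ⟨j, ?_⟩
    have h1 := hstep i
    rw [show i + 1 = j by omega] at h1
    have := hmem
    simp only [Set.mem_setOf_eq] at this
    omega

lemma bezout (A : AddSubmonoid ℕ) (s : Finset ℕ) :
    (∀ a ∈ s, a ∈ A) → ∃ u v : ℕ, u ∈ A ∧ v ∈ A ∧ (u : ℤ) - v = s.gcd id := by
  induction s using Finset.induction_on with
  | empty => exact fun _ => ⟨0, 0, A.zero_mem, A.zero_mem, by simp⟩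
  | @insert a s ha ih =>
    intro hs
    obtain ⟨u, v, hu, hv, huv⟩ := ih (fun x hx => hs x (Finset.mem_insert_of_mem hx))
    have haA : a ∈ A := hs a (Finset.mem_insert_self a s)
    set g := s.gcd id with hg
    set α := Nat.gcdA a g with hα
    set β := Nat.gcdB a g with hβ
    have hgcd : (Nat.gcd a g : ℤ) = a * α + g * β := Nat.gcd_eq_gcd_ab a g
    refine ⟨α.toNat * a + (β.toNat * u + (-β).toNat * v),
            (-α).toNat * a + ((-β).toNat * u + β.toNat * v), ?_, ?_, ?_⟩
    · exact A.add_mem (by simpa [nsmul_eq_mul] using A.nsmul_mem haA α.toNat)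
        (A.add_mem (by simpa [nsmul_eq_mul] using A.nsmul_mem hu β.toNat)
          (by simpa [nsmul_eq_mul] using A.nsmul_mem hv (-β).toNat))
    · exact A.add_mem (by simpa [nsmul_eq_mul] using A.nsmul_mem haA (-α).toNat)
        (A.add_mem (by simpa [nsmul_eq_mul] using A.nsmul_mem hu (-β).toNat)
          (by simpa [nsmul_eq_mul] using A.nsmul_mem hv β.toNat))
    · rw [Finset.gcd_insert]
      have h1 : ((α.toNat : ℤ)) - ((-α).toNat : ℤ) = α := Int.toNat_sub_toNat_neg α
      have h2 : ((β.toNat : ℤ)) - ((-β).toNat : ℤ) = β := Int.toNat_sub_toNat_neg β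
      push_cast
      show _ = (Nat.gcd a g : ℤ)
      linear_combination (a : ℤ) * h1 + ((u : ℤ) - v) * h2 - hgcd + (β : ℤ) * huv

lemma cof_of_consec (A : AddSubmonoid ℕ) (u v : ℕ) (hu : u ∈ A) (hv : v ∈ A)
    (huv : u = v + 1) : ((A : Set ℕ))ᶜ.Finite := by
  apply Set.Finite.subset (Set.finite_Iio (v * v))
  intro n hn
  simp only [Set.mem_compl_iff, SetLike.mem_coe] at hn
  by_contra hlt
  simp only [Set.mem_Iio, not_lt] at hlt
  apply hn
  rcases Nat.eq_zero_or_pos v with hv0 | hv0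
  · have hu1 : u = 1 := by omega
    have : n • (1:ℕ) ∈ A := A.nsmul_mem (hu1 ▸ hu) n
    simpa using this
  · set q := n / v with hq
    set r := n % v with hr
    have hrv : r < v := Nat.mod_lt _ hv0
    have hqv : v ≤ q := (Nat.le_div_iff_mul_le hv0).mpr hlt
    have hmod : v * q + r = n := Nat.div_add_mod n v
    have hrq : r ≤ q := le_trans hrv.le hqv
    have hn' : n = r * u + (q - r) * v := by
      zify [hrq]
      linear_combination (-(r : ℤ)) * (by exact_mod_cast huv : (u:ℤ) = v + 1) - (by exact_mod_cast hmod : (v:ℤ) * q + r = n)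
    rw [hn']
    exact A.add_mem (by simpa [nsmul_eq_mul] using A.nsmul_mem hu r)
      (by simpa [nsmul_eq_mul] using A.nsmul_mem hv (q - r))


theorem stmt14 (Λ : Set ℕ) (h : IsNumSgp Λ) (hne : Λ ≠ Set.univ) :
    (omega' Λ ≠ 1 →
      ∀ γ : ℕ, genus Λ ≤ γ → ∃ Λ' : Set ℕ, IsDescendant Λ Λ' ∧ genus Λ' = γ) ∧
    (omega' Λ = 1 →
      (∀ Λ' : Set ℕ, IsDescendant Λ Λ' → genus Λ' ≤ genus (shrink Λ)) ∧
      (∃! Λ' : Set ℕ, IsDescendant Λ Λ' ∧ genus Λ' = genus (shrink Λ))) := by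
  classical
  have hcne : Λᶜ.Nonempty := by rwa [Set.nonempty_compl]
  have hF : frob Λ ∈ Λᶜ := Nat.sSup_mem hcne h.cofinite.bddAbove
  have hFle : ∀ x, x ∉ Λ → x ≤ frob Λ := fun x hx => le_csSup h.cofinite.bddAbove hx
  have hgt : ∀ x, frob Λ < x → x ∈ Λ := by
    intro x hx
    by_contra hc
    exact absurd (hFle x hc) (not_le.mpr hx)
  have hF1 : 0 < frob Λ := by
    rcases Nat.eq_zero_or_pos (frob Λ) with h0 | h0
    · exact absurd (h0 ▸ h.zero_mem) hF
    · exact h0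
  have hLfin : (leftEls Λ).Finite :=
    Set.Finite.subset (Set.finite_Iio (frob Λ)) (fun x hx => hx.2)
  have hωD : (∀ a ∈ leftEls Λ, omega' Λ ∣ a) ∧
      ∀ e : ℕ, (∀ a ∈ leftEls Λ, e ∣ a) → e ∣ omega' Λ := by
    have hG : hLfin.toFinset.gcd id ∈ {d : ℕ | (∀ a ∈ leftEls Λ, d ∣ a) ∧
        ∀ e : ℕ, (∀ a ∈ leftEls Λ, e ∣ a) → e ∣ d} :=
      ⟨fun a ha => Finset.gcd_dvd (hLfin.mem_toFinset.mpr ha),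
       fun e he => Finset.dvd_gcd fun b hb => he b (hLfin.mem_toFinset.mp hb)⟩
    exact Nat.sInf_mem ⟨_, hG⟩
  constructor
  · -- Part (i)
    intro hω γ hγ
    set F := frob Λ with hFdef
    set c := F + 1 with hcdef
    set ω := omega' Λ with hωdef
    set Bf : ℕ → Finset ℕ := fun k => (Finset.Ico c (c + k)).filter (fun x => ¬ ω ∣ x) with hBf
    set f : ℕ → ℕ := fun k => (Bf k).card with hf
    have hbig : ∀ x ∈ Λ, ¬ ω ∣ x → c ≤ x := by
      intro x hx hd
      rcases lt_trichotomy x F with hlt | heq | hgt'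
      · exact absurd (hωD.1 x ⟨hx, hlt⟩) hd
      · exact absurd (heq ▸ hx) hF
      · omega
    set S : ℕ → Set ℕ := fun k => {x | x ∈ Λ ∧ ω ∣ x} ∪ {n | c + k ≤ n} with hS
    -- complement description
    have hScompl : ∀ k, (S k)ᶜ = Λᶜ ∪ ↑(Bf k) := by
      intro k
      ext x
      simp only [hS, hBf, Set.mem_union, Set.mem_compl_iff, Set.mem_setOf_eq,
        Finset.coe_filter, Finset.mem_Ico, not_or, not_and, not_le]
      constructor
      · rintro ⟨h1, h2⟩
        by_cases hx : x ∈ Λ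
        · right
          exact ⟨⟨hbig x hx (h1 hx), h2⟩, h1 hx⟩
        · exact Or.inl hx
      · rintro (hx | ⟨⟨hcx, hk⟩, hd⟩)
        · refine ⟨fun h' => absurd h' hx, ?_⟩
          have := hFle x hx
          omega
        · exact ⟨fun _ => hd, hk⟩
    have hgenus : ∀ k, genus (S k) = genus Λ + f k := by
      intro k
      have hdisj : Disjoint (Λᶜ) (↑(Bf k) : Set ℕ) := by
        rw [Set.disjoint_left]
        intro x hx hxB
        simp only [hBf, Finset.coe_filter, Set.mem_setOf_eq, Finset.mem_Ico] at hxB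
        exact hx (hgt x (by omega))
      show ((S k)ᶜ).ncard = _
      rw [hScompl k, Set.ncard_union_eq hdisj h.cofinite (Finset.finite_toSet _),
        Set.ncard_coe_finset]
      rfl
    have hf0 : f 0 = 0 := by simp [hf, hBf]
    have hfstep : ∀ k, f (k + 1) ≤ f k + 1 := by
      intro k
      have hsub : Bf (k+1) ⊆ insert (c+k) (Bf k) := by
        intro x hx
        simp only [hBf, Finset.mem_filter, Finset.mem_Ico] at hx
        simp only [Finset.mem_insert, hBf, Finset.mem_filter, Finset.mem_Ico]
        by_cases hxe : x = c + k
        · exact Or.inl hxe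
        · exact Or.inr ⟨⟨hx.1.1, by omega⟩, hx.2⟩
      calc f (k+1) ≤ (insert (c+k) (Bf k)).card := Finset.card_le_card hsub
        _ ≤ f k + 1 := Finset.card_insert_le _ _
    have hub : ∀ m, ∃ k, m ≤ f k := by
      intro m
      rcases Nat.eq_zero_or_pos ω with hω0 | hωpos
      · refine ⟨m, ?_⟩
        have : Bf m = Finset.Ico c (c + m) := by
          apply Finset.filter_true_of_mem
          intro x hx
          simp only [Finset.mem_Ico] at hx
          rw [hω0]
          simp only [Nat.zero_dvd]
          omega
        simp [hf, this]
      · have hω2 : 2 ≤ ω := by omega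
        have hstep2 : ∀ k, f k + 1 ≤ f (k + ω) := by
          intro k
          set x := if ω ∣ c + k then c + k + 1 else c + k with hx
          have hx1 : x ∈ Bf (k + ω) := by
            simp only [hBf, Finset.mem_filter, Finset.mem_Ico]
            split_ifs at hx with hdvd
            · refine ⟨⟨by omega, by omega⟩, ?_⟩
              rw [hx]
              intro hc2
              have := Nat.dvd_sub hc2 hdvd
              simp only [Nat.add_sub_cancel_left] at this
              have := Nat.le_of_dvd (by omega) this
              omega
            · exact ⟨⟨by omega, by omega⟩, hx ▸ hdvd⟩
          have hx2 : x ∉ Bf k := by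
            simp only [hBf, Finset.mem_filter, Finset.mem_Ico]
            intro hc2
            have := hc2.1.2
            split_ifs at hx <;> omega
          have hsub : insert x (Bf k) ⊆ Bf (k + ω) := by
            intro y hy
            rcases Finset.mem_insert.mp hy with rfl | hy
            · exact hx1
            · simp only [hBf, Finset.mem_filter, Finset.mem_Ico] at hy ⊢
              exact ⟨⟨hy.1.1, by omega⟩, hy.2⟩
          calc f k + 1 = (insert x (Bf k)).card := (Finset.card_insert_of_notMem hx2).symm
            _ ≤ f (k + ω) := Finset.card_le_card hsub
        refine ⟨m * ω, ?_⟩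
        induction m with
        | zero => omega
        | succ n ih =>
          have := hstep2 (n * ω)
          have : f (n * ω) + 1 ≤ f (n * ω + ω) := hstep2 (n * ω)
          rw [show (n+1) * ω = n * ω + ω by ring]
          omega
    obtain ⟨k, hk⟩ := ivtNat f hf0 hfstep hub (γ - genus Λ)
    refine ⟨S k, ⟨⟨?_, ?_, ?_⟩, ?_, ?_⟩, ?_⟩
    · exact Or.inl ⟨h.zero_mem, dvd_zero ω⟩
    · rintro a b (⟨ha1, ha2⟩ | ha) (⟨hb1, hb2⟩ | hb)
      · exact Or.inl ⟨h.add_mem ha1 hb1, dvd_add ha2 hb2⟩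
      · exact Or.inr (by simp only [Set.mem_setOf_eq] at hb ⊢; omega)
      · exact Or.inr (by simp only [Set.mem_setOf_eq] at ha ⊢; omega)
      · exact Or.inr (by simp only [Set.mem_setOf_eq] at ha ⊢; omega)
    · apply Set.Finite.subset (Set.finite_Iio (c + k))
      intro x hx
      simp only [hS, Set.mem_union, Set.mem_compl_iff, Set.mem_setOf_eq, not_or] at hx
      simp only [Set.mem_Iio]
      omega
    · rintro x (⟨hx, _⟩ | hx)
      · exact hx
      · exact hgt x (by simp only [Set.mem_setOf_eq] at hx; omega)
    · rintro x ⟨hx1, hx2⟩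
      simp only [hS, Set.mem_union, Set.mem_setOf_eq, not_or, not_and, not_le] at hx2
      have := hbig x hx1 (hx2.1 hx1)
      omega
    · rw [hgenus k, hk]
      omega
  · -- Part (ii)
    intro hω1
    have himg : (fun x => x / omega' Λ) '' leftEls Λ = leftEls Λ := by
      rw [hω1]
      simp
    have hshr : shrink Λ = (AddSubmonoid.closure (leftEls Λ) : Set ℕ) := by
      unfold shrink
      rw [himg]
    set A : AddSubmonoid ℕ := AddSubmonoid.closure (leftEls Λ) with hA
    have hG1 : hLfin.toFinset.gcd id = 1 := by
      have h1 : hLfin.toFinset.gcd id ∣ omega' Λ :=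
        hωD.2 _ (fun a ha => Finset.gcd_dvd (hLfin.mem_toFinset.mpr ha))
      rw [hω1] at h1
      exact Nat.dvd_one.mp h1
    obtain ⟨u, v, hu, hv, huv⟩ := bezout A hLfin.toFinset
      (fun a ha => AddSubmonoid.subset_closure (hLfin.mem_toFinset.mp ha))
    rw [hG1] at huv
    have huv' : u = v + 1 := by exact_mod_cast (by push_cast at huv ⊢; linarith : (u:ℤ) = (v:ℤ) + 1)
    have hcof : ((A : Set ℕ))ᶜ.Finite := cof_of_consec A u v hu hv huv'
    have hAsub : (A : Set ℕ) ⊆ Λ := by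
      have : A ≤ ({ carrier := Λ, add_mem' := fun ha hb => h.add_mem ha hb, zero_mem' := h.zero_mem } : AddSubmonoid ℕ) :=
        AddSubmonoid.closure_le.mpr (fun x hx => hx.1)
      exact this
    have hdesc : IsDescendant Λ (shrink Λ) := by
      rw [hshr]
      refine ⟨⟨A.zero_mem, fun a b ha hb => A.add_mem ha hb, hcof⟩, hAsub, ?_⟩
      rintro x ⟨hx1, hx2⟩
      rcases lt_trichotomy x (frob Λ) with hlt | heq | hgt'
      · exact absurd (AddSubmonoid.subset_closure (show x ∈ leftEls Λ from ⟨hx1, hlt⟩)) hx2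
      · exact absurd (heq ▸ hx1) hF
      · exact hgt'
    have hcontain : ∀ Λ' : Set ℕ, IsDescendant Λ Λ' → shrink Λ ⊆ Λ' := by
      rintro Λ' ⟨hN, hsub, hgap⟩
      rw [hshr]
      have hL' : leftEls Λ ⊆ Λ' := by
        intro x hx
        by_contra hx'
        exact absurd (hgap x ⟨hx.1, hx'⟩) (not_lt.mpr hx.2.le)
      have : A ≤ ({ carrier := Λ', add_mem' := fun ha hb => hN.add_mem ha hb, zero_mem' := hN.zero_mem } : AddSubmonoid ℕ) :=
        AddSubmonoid.closure_le.mpr hL'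
      exact this
    have hcof' : (shrink Λ)ᶜ.Finite := by rw [hshr]; exact hcof
    refine ⟨?_, shrink Λ, ⟨hdesc, rfl⟩, ?_⟩
    · intro Λ' hd
      exact Set.ncard_le_ncard (Set.compl_subset_compl.mpr (hcontain Λ' hd)) hcof'
    · rintro Λ' ⟨hd, hg⟩
      have hcs : Λ'ᶜ ⊆ (shrink Λ)ᶜ := Set.compl_subset_compl.mpr (hcontain Λ' hd)
      have heq : Λ'ᶜ = (shrink Λ)ᶜ :=
        Set.eq_of_subset_of_ncard_le hcs (le_of_eq hg.symm) hcof'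
      exact compl_injective heq

end NumSgpPaper
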